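/- Let M₄(ℂ[X,Y])₀ be the algebra of 4×4 matrices over ℂ[X,Y] whose 2×2 diagonal blocks have entries of even total degree and whose off-diagonal 2×2 blocks have entries of odd total degree. For a pair (z,z') of complex numbers, the evaluation map ev_{(z,z')} : M₄(ℂ[X,Y])₀ → M₄(ℂ), P(X,Y) ↦ P(z,z'), is surjective if and only if (z,z') ≠ (0,0); when (z,z') = (0,0), the image of ev_{(0,0)} equals the block-diagonal subalgebra M₂(ℂ) ⊕ M₂(ℂ) ⊆ M₄(ℂ). -/

import Mathlib

open MvPolynomial

/-- A polynomial in `ℂ[X,Y]` is even when all its monomials `XᵐYⁿ` have `m + n` even. -/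
def IsEvenPoly (p : MvPolynomial (Fin 2) ℂ) : Prop :=
  ∀ m : Fin 2 →₀ ℕ, Odd (m 0 + m 1) → MvPolynomial.coeff m p = 0

/-- A polynomial in `ℂ[X,Y]` is odd when all its monomials `XᵐYⁿ` have `m + n` odd. -/
def IsOddPoly (p : MvPolynomial (Fin 2) ℂ) : Prop :=
  ∀ m : Fin 2 →₀ ℕ, Even (m 0 + m 1) → MvPolynomial.coeff m p = 0

/-- Membership in `M₄(ℂ[X,Y])₀`: the `2×2` diagonal blocks have entries of even
total degree and the `2×2` off-diagonal blocks have entries of odd total degree. -/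
def MemM4Even (P : Matrix (Fin 4) (Fin 4) (MvPolynomial (Fin 2) ℂ)) : Prop :=
  ∀ i j : Fin 4,
    (((i : ℕ) < 2 ↔ (j : ℕ) < 2) → IsEvenPoly (P i j)) ∧
    (¬((i : ℕ) < 2 ↔ (j : ℕ) < 2) → IsOddPoly (P i j))

lemma isEvenPoly_C (c : ℂ) : IsEvenPoly (MvPolynomial.C c) := by
  intro m hm
  rw [MvPolynomial.coeff_C]
  rcases eq_or_ne (0 : Fin 2 →₀ ℕ) m with h | h
  · exfalso
    rw [← h] at hm
    simp at hm
  · simp [h]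

lemma isOddPoly_CX (a : ℂ) (i : Fin 2) : IsOddPoly (MvPolynomial.C a * MvPolynomial.X i) := by
  intro m hm
  rw [MvPolynomial.coeff_C_mul, MvPolynomial.coeff_X']
  rcases eq_or_ne (Finsupp.single i 1) m with h | h
  · exfalso
    rw [← h] at hm
    fin_cases i <;> simp [Finsupp.single_apply] at hm <;> omega
  · simp [h]

lemma isOddPoly_zero : IsOddPoly 0 := by
  intro m _; simp

noncomputable def oddFor (z z' c : ℂ) : MvPolynomial (Fin 2) ℂ :=
  if z = 0 then MvPolynomial.C (c / z') * MvPolynomial.X 1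
  else MvPolynomial.C (c / z) * MvPolynomial.X 0

lemma oddFor_odd (z z' c : ℂ) : IsOddPoly (oddFor z z' c) := by
  unfold oddFor
  split <;> exact isOddPoly_CX _ _

lemma oddFor_eval (z z' c : ℂ) (h : (z, z') ≠ ((0 : ℂ), (0 : ℂ))) :
    MvPolynomial.eval ![z, z'] (oddFor z z' c) = c := by
  unfold oddFor
  split_ifs with hz
  · have hz' : z' ≠ 0 := by
      intro h'; exact h (by simp [hz, h'])
    simp [hz']
  · simp
    field_simp

lemma eval_zero_pair (p : MvPolynomial (Fin 2) ℂ) :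
    MvPolynomial.eval ![(0 : ℂ), (0 : ℂ)] p = MvPolynomial.coeff 0 p := by
  have : ![(0 : ℂ), (0 : ℂ)] = (0 : Fin 2 → ℂ) := by
    funext i; fin_cases i <;> rfl
  rw [this, MvPolynomial.eval_zero]
  rfl

/-- For a pair `(z,z')` of complex numbers, the evaluation map
`ev_{(z,z')} : M₄(ℂ[X,Y])₀ → M₄(ℂ)` is surjective if and only if `(z,z') ≠ (0,0)`;
when `(z,z') = (0,0)`, the image of `ev_{(0,0)}` equals the block-diagonal subalgebra
`M₂(ℂ) ⊕ M₂(ℂ) ⊆ M₄(ℂ)`. -/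
theorem evaluation_surjective_iff :
    (∀ z z' : ℂ, ((z, z') ≠ ((0 : ℂ), (0 : ℂ)) ↔
        ∀ M : Matrix (Fin 4) (Fin 4) ℂ, ∃ P, MemM4Even P ∧
          P.map (MvPolynomial.eval ![z, z']) = M)) ∧
    ({M : Matrix (Fin 4) (Fin 4) ℂ | ∃ P, MemM4Even P ∧
          P.map (MvPolynomial.eval ![(0 : ℂ), (0 : ℂ)]) = M}
        = {M | ∀ i j : Fin 4, ¬((i : ℕ) < 2 ↔ (j : ℕ) < 2) → M i j = 0}) := by
  constructor
  · intro z z'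
    constructor
    · intro h M
      refine ⟨fun i j => if ((i : ℕ) < 2 ↔ (j : ℕ) < 2) then MvPolynomial.C (M i j)
        else oddFor z z' (M i j), ?_, ?_⟩
      · intro i j
        constructor
        · intro hij
          simp only [if_pos hij]
          exact isEvenPoly_C _
        · intro hij
          simp only [if_neg hij]
          exact oddFor_odd _ _ _
      · ext i j
        change MvPolynomial.eval ![z, z'] (if ((i : ℕ) < 2 ↔ (j : ℕ) < 2) then MvPolynomial.C (M i j) else oddFor z z' (M i j)) = M i j
        split_ifs with hij
        · simp
        · exact oddFor_eval z z' _ h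
    · intro h hzz
      obtain ⟨P, hP, hPe⟩ := h (Matrix.of fun _ _ => (1 : ℂ))
      have hodd : IsOddPoly (P 0 2) := (hP 0 2).2 (by norm_num)
      have h02 : MvPolynomial.eval ![z, z'] (P 0 2) = 1 := by
        have := congrFun (congrFun hPe 0) 2
        simpa using this
      have hz0 : z = 0 ∧ z' = 0 := by
        have := Prod.mk.injEq z z' (0 : ℂ) 0 ▸ hzz
        exact Prod.mk.inj hzz
      rw [hz0.1, hz0.2, eval_zero_pair] at h02
      rw [hodd 0 (by simp)] at h02
      exact zero_ne_one h02
  · ext M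
    simp only [Set.mem_setOf_eq]
    constructor
    · rintro ⟨P, hP, rfl⟩ i j hij
      simp only [Matrix.map_apply, eval_zero_pair]
      exact (hP i j).2 hij 0 (by simp)
    · intro h
      refine ⟨fun i j => MvPolynomial.C (M i j), ?_, ?_⟩
      · intro i j
        refine ⟨fun _ => isEvenPoly_C _, fun hij => ?_⟩
        simpa [h i j hij] using isOddPoly_zero
      · ext i j
        change MvPolynomial.eval ![(0 : ℂ), (0 : ℂ)] (MvPolynomial.C (M i j)) = M i j
        simp
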